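/- Let J be the probability distribution on [0,1] × {0,1} that puts mass 1/2 on the point (0, 0) and mass 1/2 on the point (1/2, 1). Let M₋ be the class of nonincreasing functions [0,1] → [0,1] and let W = thr'(M₋). Then CE_W(J) ≥ 1/4, yet CDL_{M₋}(J) ≤ 0. In particular, the quadratic characterization CE_{thr'(K)}(J)² ≲ CDL_K(J) fails for K = M₋ (which is translation invariant but does not contain the identity). -/
import Mathlib


open MeasureTheory Set

noncomputable section

/-- Expected loss of prediction `p` when the outcome is `y ~ Bernoulli(q)`:
`ℓ(p,q) = q·ℓ(p,1) + (1−q)·ℓ(p,0)`. -/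
def elos (ℓ : ℝ → ℝ → ℝ) (p q : ℝ) : ℝ := q * ℓ p 1 + (1 - q) * ℓ p 0

/-- A loss is proper if truthful prediction minimizes expected loss. -/
def IsProper (ℓ : ℝ → ℝ → ℝ) : Prop :=
  ∀ p ∈ Icc (0:ℝ) 1, ∀ q ∈ Icc (0:ℝ) 1, elos ℓ q q ≤ elos ℓ p q

/-- The class `L*` of proper losses with `|ℓ(p,1) − ℓ(p,0)| ≤ 1`. -/
def Lstar (ℓ : ℝ → ℝ → ℝ) : Prop :=
  IsProper ℓ ∧ ∀ p ∈ Icc (0:ℝ) 1, |ℓ p 1 - ℓ p 0| ≤ 1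

/-- Projection onto `[0,1]`. -/
def proj01 (x : ℝ) : ℝ := max 0 (min 1 x)

/-- Calibration decision loss of `J` relative to the post-processing class `K`:
`sup` over `ℓ ∈ L*` and `κ ∈ K` of `E[ℓ(p,y) − ℓ(κ(p),y)]`. -/
def CDL (K : Set (ℝ → ℝ)) (J : Measure (ℝ × ℝ)) : ℝ :=
  sSup { x | ∃ ℓ κ, Lstar ℓ ∧ κ ∈ K ∧
    x = ∫ z, (ℓ z.1 z.2 - ℓ (κ z.1) z.2) ∂J }

/-- `sign_s(t)`: `+1` if `t > 0`, `−1` if `t < 0`, and `s` if `t = 0`. -/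
def signS (s t : ℝ) : ℝ := if 0 < t then 1 else if t < 0 then -1 else s

/-- `sign₊ = sign_{+1}`. -/
def signP (t : ℝ) : ℝ := signS 1 t

/-- The V-shaped loss `ℓ_{v,s}(p,y) = −sign_s(p−v)·(y−v)`. -/
def vloss (v s : ℝ) : ℝ → ℝ → ℝ := fun p y => -(signS s (p - v)) * (y - v)

/-- A valid post-processing class: maps `[0,1]` to `[0,1]`, contains the identity, and
is translation invariant. -/
def ValidClass (K : Set (ℝ → ℝ)) : Prop :=
  (∀ κ ∈ K, ∀ p ∈ Icc (0:ℝ) 1, κ p ∈ Icc (0:ℝ) 1) ∧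
  ((fun p : ℝ => p) ∈ K) ∧
  (∀ s t : ℝ, ∀ κ ∈ K, (fun p : ℝ => proj01 (κ (proj01 (p + s)) + t)) ∈ K)

/-- Upper thresholds of a post-processing class. -/
def thr (K : Set (ℝ → ℝ)) : Set (ℝ → ℝ) :=
  { w | ∃ κ ∈ K, w = fun p => signP (κ p - 1/2) }

/-- Modified thresholds: `thr(K)` together with all lower thresholds of the identity. -/
def thr' (K : Set (ℝ → ℝ)) : Set (ℝ → ℝ) :=
  thr K ∪ { w | ∃ v : ℝ, w = fun p => -signP (p - v) }

/-- Weight-restricted calibration error `CE_W(J) = sup_{w ∈ W} E[w(p)(y − p)]`. -/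
def CE (W : Set (ℝ → ℝ)) (J : Measure (ℝ × ℝ)) : ℝ :=
  sSup { x | ∃ w ∈ W, x = ∫ z, w z.1 * (z.2 - z.1) ∂J }

/-- A probability distribution on `[0,1] × {0,1}`. -/
def IsPredDist (J : Measure (ℝ × ℝ)) : Prop :=
  IsProbabilityMeasure J ∧ ∀ᵐ z ∂J, z.1 ∈ Icc (0:ℝ) 1 ∧ (z.2 = 0 ∨ z.2 = 1)

/-- The class `M₊` of nondecreasing post-processings `[0,1] → [0,1]`. -/
def Mplus : Set (ℝ → ℝ) :=
  { κ | (∀ p ∈ Icc (0:ℝ) 1, κ p ∈ Icc (0:ℝ) 1) ∧ MonotoneOn κ (Icc (0:ℝ) 1) }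

/-- The class `M₋` of nonincreasing post-processings `[0,1] → [0,1]`. -/
def Mminus : Set (ℝ → ℝ) :=
  { κ | (∀ p ∈ Icc (0:ℝ) 1, κ p ∈ Icc (0:ℝ) 1) ∧ AntitoneOn κ (Icc (0:ℝ) 1) }


/-- Auxiliary: integral against a two-point measure. -/
lemma integral_twopoint_aux (f : ℝ × ℝ → ℝ) (a b : ℝ × ℝ) :
    ∫ z, f z ∂((1/2 : ENNReal) • Measure.dirac a + (1/2 : ENNReal) • Measure.dirac b)
      = 1/2 * f a + 1/2 * f b := by
  have hia : Integrable f (Measure.dirac a) :=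
    (integrable_const (f a)).congr (ae_eq_dirac f).symm
  have hib : Integrable f (Measure.dirac b) :=
    (integrable_const (f b)).congr (ae_eq_dirac f).symm
  rw [integral_add_measure (hia.smul_measure (by norm_num)) (hib.smul_measure (by norm_num)),
    integral_smul_measure, integral_smul_measure, integral_dirac, integral_dirac]
  norm_num

lemma signP_le_one_aux (t : ℝ) : signP t ≤ 1 := by
  unfold signP signS; split_ifs <;> norm_num

lemma neg_one_le_signP_aux (t : ℝ) : -1 ≤ signP t := by
  unfold signP signS; split_ifs <;> norm_num

/-- Auxiliary: for a proper loss, `ℓ(·,0)` is nondecreasing on `[0,1]`. -/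
lemma proper_mono_zero_aux (ℓ : ℝ → ℝ → ℝ) (hP : IsProper ℓ) (a b : ℝ)
    (ha : a ∈ Icc (0:ℝ) 1) (hb : b ∈ Icc (0:ℝ) 1) (hba : b ≤ a) : ℓ b 0 ≤ ℓ a 0 := by
  have I1 := hP a ha b hb
  have I2 := hP b hb a ha
  unfold elos at I1 I2
  rcases eq_or_lt_of_le hba with h | h
  · rw [h]
  · nlinarith [mul_le_mul_of_nonneg_left I1 ha.1, mul_le_mul_of_nonneg_left I2 hb.1,
      mul_pos (sub_pos.2 h) (sub_pos.2 h)]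

/-- for the two-point distribution `J` putting mass `1/2` on `(0,0)` and on
`(1/2,1)`, we have `CE_{thr'(M₋)}(J) ≥ 1/4` yet `CDL_{M₋}(J) ≤ 0`. -/
theorem translation_invariance_insufficient (J : Measure (ℝ × ℝ))
    (hJ : J = (1/2 : ENNReal) • Measure.dirac ((0:ℝ), (0:ℝ)) +
              (1/2 : ENNReal) • Measure.dirac ((1/2:ℝ), (1:ℝ))) :
    1/4 ≤ CE (thr' Mminus) J ∧ CDL Mminus J ≤ 0 := by
  subst hJ
  have h0 : (0:ℝ) ∈ Icc (0:ℝ) 1 := by norm_num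
  have h12 : (1/2:ℝ) ∈ Icc (0:ℝ) 1 := by norm_num
  constructor
  · -- CE lower bound
    apply le_csSup
    · -- bounded above by 1/4
      refine ⟨1/4, ?_⟩
      rintro x ⟨w, hw, rfl⟩
      rw [integral_twopoint_aux (fun z => w z.1 * (z.2 - z.1)) _ _]
      have hw2 : w (1/2) ≤ 1 := by
        rcases hw with ⟨κ, _, rfl⟩ | ⟨v, rfl⟩
        · exact signP_le_one_aux _
        · have := neg_one_le_signP_aux ((1:ℝ)/2 - v)
          simp only
          linarith
      simp only
      nlinarith [hw2]
    · -- witness: κ = const 1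
      refine ⟨fun p => signP ((fun _ : ℝ => (1:ℝ)) p - 1/2), Or.inl ⟨fun _ => 1, ⟨fun p _ => by norm_num, antitoneOn_const⟩, rfl⟩, ?_⟩
      rw [integral_twopoint_aux (fun z => signP ((1:ℝ) - 1/2) * (z.2 - z.1)) _ _]
      have : signP ((1:ℝ) - 1/2) = 1 := by
        unfold signP signS; norm_num
      simp only [this]
      norm_num
  · -- CDL ≤ 0
    apply Real.sSup_le _ (le_refl 0)
    rintro x ⟨ℓ, κ, hL, hκ, rfl⟩
    rw [integral_twopoint_aux (fun z => ℓ z.1 z.2 - ℓ (κ z.1) z.2) _ _]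
    have hP := hL.1
    have ha : κ 0 ∈ Icc (0:ℝ) 1 := hκ.1 0 h0
    have hb : κ (1/2) ∈ Icc (0:ℝ) 1 := hκ.1 (1/2) h12
    have hba : κ (1/2) ≤ κ 0 := hκ.2 h0 h12 (by norm_num)
    have P1 := hP (κ (1/2)) hb (1/2) h12
    have P2 := hP (1/2) h12 0 h0
    have P3 := proper_mono_zero_aux ℓ hP (κ 0) (κ (1/2)) ha hb hba
    unfold elos at P1 P2
    simp only
    nlinarith [P1, P2, P3]
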